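/- The set M = {(a₁,a₂,a₃,a₄) ∈ ℕ⁴ : 2a₁ + a₄ = a₂ + a₃} is a submonoid of ℕ⁴, and it is generated as a monoid by the five elements (1,2,0,0), (1,1,1,0), (1,0,2,0), (0,1,0,1), (0,0,1,1). -/

import Mathlib

private def Sgen : Set (Fin 4 → ℕ) :=
  {![1,2,0,0], ![1,1,1,0], ![1,0,2,0], ![0,1,0,1], ![0,0,1,1]}

private lemma gen_mem (g : Fin 4 → ℕ) (hg : g ∈ Sgen) :
    g ∈ AddSubmonoid.closure Sgen := AddSubmonoid.subset_closure hg

private lemma key : ∀ n (a : Fin 4 → ℕ), a 0 + a 3 ≤ n →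
    2 * a 0 + a 3 = a 1 + a 2 → a ∈ AddSubmonoid.closure Sgen := by
  intro n
  induction n with
  | zero =>
    intro a hn h
    have e0 : a 0 = 0 := by omega
    have e3 : a 3 = 0 := by omega
    have e1 : a 1 = 0 := by omega
    have e2 : a 2 = 0 := by omega
    have : a = 0 := by
      funext i; fin_cases i; exacts [e0, e1, e2, e3]
    rw [this]; exact zero_mem _
  | succ n ih =>
    intro a hn h
    by_cases h0 : a 0 > 0
    · -- a 1 + a 2 ≥ 2
      rcases Nat.lt_or_ge (a 1) 1 with h1 | h1
      · -- a 1 = 0, a 2 ≥ 2, use ![1,0,2,0]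
        have hb : a = ![1,0,2,0] + fun i => a i - ![1,0,2,0] i := by
          funext i; fin_cases i <;> simp [Matrix.cons_val_zero, Matrix.cons_val_one] <;> omega
        rw [hb]
        refine add_mem (gen_mem _ (by simp [Sgen])) (ih _ ?_ ?_) <;> simp <;> omega
      · rcases Nat.lt_or_ge (a 2) 1 with h2 | h2
        · -- a 2 = 0, a 1 ≥ 2, use ![1,2,0,0]
          have hb : a = ![1,2,0,0] + fun i => a i - ![1,2,0,0] i := by
            funext i; fin_cases i <;> simp <;> omega
          rw [hb]
          refine add_mem (gen_mem _ (by simp [Sgen])) (ih _ ?_ ?_) <;> simp <;> omega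
        · -- use ![1,1,1,0]
          have hb : a = ![1,1,1,0] + fun i => a i - ![1,1,1,0] i := by
            funext i; fin_cases i <;> simp <;> omega
          rw [hb]
          refine add_mem (gen_mem _ (by simp [Sgen])) (ih _ ?_ ?_) <;> simp <;> omega
    · -- a 0 = 0
      by_cases h3 : a 3 > 0
      · rcases Nat.lt_or_ge (a 1) 1 with h1 | h1
        · -- a 2 > 0, use ![0,0,1,1]
          have hb : a = ![0,0,1,1] + fun i => a i - ![0,0,1,1] i := by
            funext i; fin_cases i <;> simp <;> omega
          rw [hb]
          refine add_mem (gen_mem _ (by simp [Sgen])) (ih _ ?_ ?_) <;> simp <;> omega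
        · -- use ![0,1,0,1]
          have hb : a = ![0,1,0,1] + fun i => a i - ![0,1,0,1] i := by
            funext i; fin_cases i <;> simp <;> omega
          rw [hb]
          refine add_mem (gen_mem _ (by simp [Sgen])) (ih _ ?_ ?_) <;> simp <;> omega
      · have e0 : a 0 = 0 := by omega
        have e3 : a 3 = 0 := by omega
        have e1 : a 1 = 0 := by omega
        have e2 : a 2 = 0 := by omega
        have : a = 0 := by
          funext i; fin_cases i; exacts [e0, e1, e2, e3]
        rw [this]; exact zero_mem _

/-- The set `M = {a ∈ ℕ⁴ | 2a₁ + a₄ = a₂ + a₃}` is a submonoid of `ℕ⁴` (it contains `0`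
and is closed under addition), and it is generated as a monoid by the five elements. -/
theorem invariant_monomial_monoid :
    (0 : Fin 4 → ℕ) ∈ {a : Fin 4 → ℕ | 2 * a 0 + a 3 = a 1 + a 2} ∧
    (∀ a ∈ {a : Fin 4 → ℕ | 2 * a 0 + a 3 = a 1 + a 2},
      ∀ b ∈ {a : Fin 4 → ℕ | 2 * a 0 + a 3 = a 1 + a 2},
        a + b ∈ {a : Fin 4 → ℕ | 2 * a 0 + a 3 = a 1 + a 2}) ∧
    {a : Fin 4 → ℕ | 2 * a 0 + a 3 = a 1 + a 2} =
      ↑(AddSubmonoid.closure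
        ({![1,2,0,0], ![1,1,1,0], ![1,0,2,0], ![0,1,0,1], ![0,0,1,1]} :
          Set (Fin 4 → ℕ))) := by
  refine ⟨by simp, fun a ha b hb => ?_, ?_⟩
  · simp only [Set.mem_setOf_eq, Pi.add_apply] at *; omega
  · ext a
    constructor
    · intro ha
      exact key (a 0 + a 3) a le_rfl ha
    · intro ha
      induction ha using AddSubmonoid.closure_induction with
      | mem g hg =>
        simp only [Sgen, Set.mem_insert_iff, Set.mem_singleton_iff] at hg
        rcases hg with rfl | rfl | rfl | rfl | rfl <;> simp
      | zero => simp
      | add x y _ _ hx hy =>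
        simp only [Set.mem_setOf_eq, Pi.add_apply] at *; omega
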